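/- Let q be a prime power with q ≡ 3 (mod 4) and q > 2^{4k+2}. Then the Paley tournament PT_q (vertices GF(q), x → y iff y − x is a nonzero square) admits no transitive k-coloring of its edges. -/

import Mathlib

open Finset

private lemma sum_shift_char {F : Type*} [Field F] [Fintype F] [DecidableEq F]
    (hF : ringChar F ≠ 2) {d : F} (hd : d ≠ 0) :
    ∑ x : F, quadraticChar F x * quadraticChar F (x - d) = -1 := by
  have h0 : ∑ x : F, quadraticChar F x * quadraticChar F (x - d)
      = ∑ x ∈ Finset.univ.erase (0 : F), quadraticChar F x * quadraticChar F (x - d) := by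
    rw [← Finset.add_sum_erase _ _ (Finset.mem_univ (0 : F))]
    simp [quadraticChar_zero]
  rw [h0]
  have h1 : ∀ x ∈ Finset.univ.erase (0 : F),
      quadraticChar F x * quadraticChar F (x - d) = quadraticChar F (1 - d * x⁻¹) := by
    intro x hx
    have hx0 : x ≠ 0 := Finset.ne_of_mem_erase hx
    have hfac : x * (x - d) = x ^ 2 * (1 - d * x⁻¹) := by
      field_simp
    rw [← map_mul, hfac, map_mul, quadraticChar_sq_one' hx0, one_mul]
  rw [Finset.sum_congr rfl h1]
  have h2 : ∑ x ∈ Finset.univ.erase (0 : F), quadraticChar F (1 - d * x⁻¹)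
      = ∑ z ∈ Finset.univ.erase (1 : F), quadraticChar F z := by
    apply Finset.sum_nbij' (i := fun x => 1 - d * x⁻¹) (j := fun z => d * (1 - z)⁻¹)
    · intro x hx
      have hx0 : x ≠ 0 := Finset.ne_of_mem_erase hx
      refine Finset.mem_erase.mpr ⟨?_, Finset.mem_univ _⟩
      intro h
      have : d * x⁻¹ = 0 := by linear_combination -h
      rcases mul_eq_zero.mp this with h' | h'
      · exact hd h'
      · exact hx0 (inv_eq_zero.mp h')
    · intro z hz
      have hz1 : z ≠ 1 := Finset.ne_of_mem_erase hz
      refine Finset.mem_erase.mpr ⟨?_, Finset.mem_univ _⟩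
      intro h
      rcases mul_eq_zero.mp h with h' | h'
      · exact hd h'
      · exact sub_ne_zero.mpr (fun he => hz1 he.symm) (inv_eq_zero.mp h')
    · intro x hx
      have hx0 : x ≠ 0 := Finset.ne_of_mem_erase hx
      field_simp
      rw [sub_sub_cancel, div_self hd]
    · intro z hz
      have hz1 : z ≠ 1 := Finset.ne_of_mem_erase hz
      have h1z : (1 : F) - z ≠ 0 := sub_ne_zero.mpr (fun he => hz1 he.symm)
      field_simp
      ring
    · intro x hx
      rfl
  rw [h2, Finset.sum_erase_eq_sub (Finset.mem_univ (1 : F)), quadraticChar_sum_zero hF,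
    map_one, zero_sub]

private lemma pair_bound {F : Type*} [Field F] [Fintype F] [DecidableEq F]
    (hF : ringChar F ≠ 2) {A B : Finset F}
    (h : ∀ a ∈ A, ∀ b ∈ B, quadraticChar F (b - a) = 1) :
    A.card * B.card ≤ Fintype.card F := by
  set χ := quadraticChar F with hχ
  set q : ℤ := (Fintype.card F : ℤ) with hqdef
  -- diagonal sums
  have diag : ∀ b : F, ∑ x : F, χ (b - x) * χ (b - x) = q - 1 := by
    intro b
    have hpt : ∀ x : F, χ (b - x) * χ (b - x) = if x = b then 0 else 1 := by
      intro x
      by_cases hx : x = b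
      · subst hx; simp [hχ, quadraticChar_zero]
      · have hbx : b - x ≠ 0 := sub_ne_zero.mpr (fun he => hx he.symm)
        rw [if_neg hx, ← pow_two]
        exact quadraticChar_sq_one hbx
    rw [Finset.sum_congr rfl (fun x _ => hpt x),
      ← Finset.add_sum_erase _ _ (Finset.mem_univ b), if_pos rfl, zero_add,
      Finset.sum_congr rfl (fun x hx => if_neg (Finset.ne_of_mem_erase hx)),
      Finset.sum_const, Finset.card_erase_of_mem (Finset.mem_univ b), Finset.card_univ]
    have hcard : (1 : ℕ) ≤ Fintype.card F := Fintype.card_pos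
    rw [nsmul_eq_mul, mul_one, Nat.cast_sub hcard, hqdef]
    push_cast
    ring
  -- off-diagonal sums
  have offd : ∀ b b' : F, b ≠ b' → ∑ x : F, χ (b - x) * χ (b' - x) = -1 := by
    intro b b' hbb'
    have hd : b - b' ≠ 0 := sub_ne_zero.mpr hbb'
    have hre : ∀ x : F, χ (b - x) * χ (b' - x)
        = (fun y => χ y * χ (y - (b - b'))) ((Equiv.subLeft b) x) := by
      intro x
      simp only [Equiv.subLeft_apply]
      congr 2
      ring
    rw [Finset.sum_congr rfl (fun x _ => hre x)]
    exact (Equiv.sum_comp (Equiv.subLeft b)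
      (fun y => χ y * χ (y - (b - b')))).trans (sum_shift_char hF hd)
  -- expansion of the square sum
  have hexp : ∑ x : F, (∑ b ∈ B, χ (b - x)) ^ 2 = (B.card : ℤ) * q - (B.card : ℤ) ^ 2 := by
    have h1 : ∀ x : F, (∑ b ∈ B, χ (b - x)) ^ 2
        = ∑ b ∈ B, ∑ b' ∈ B, χ (b - x) * χ (b' - x) := by
      intro x
      rw [pow_two, Finset.sum_mul_sum]
    rw [Finset.sum_congr rfl (fun x _ => h1 x)]
    rw [Finset.sum_comm]
    have h2 : ∀ b ∈ B, ∑ x : F, ∑ b' ∈ B, χ (b - x) * χ (b' - x)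
        = (q - 1) - ((B.card : ℤ) - 1) := by
      intro b hb
      rw [Finset.sum_comm]
      rw [← Finset.add_sum_erase _ _ hb, diag b]
      have h3 : ∀ b' ∈ B.erase b, ∑ x : F, χ (b' - x) * χ (b - x) = -1 := by
        intro b' hb'
        exact offd b' b (Finset.ne_of_mem_erase hb')
      have h4 : ∀ b' ∈ B.erase b, ∑ x : F, χ (b - x) * χ (b' - x) = -1 := by
        intro b' hb'
        have := h3 b' hb'
        rw [← this]
        exact Finset.sum_congr rfl (fun x _ => mul_comm _ _)
      rw [Finset.sum_congr rfl h4, Finset.sum_const, Finset.card_erase_of_mem hb]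
      have hcb : (1 : ℕ) ≤ B.card := Finset.card_pos.mpr ⟨b, hb⟩
      rw [nsmul_eq_mul, Nat.cast_sub hcb]
      push_cast
      ring
    rw [Finset.sum_congr rfl h2, Finset.sum_const]
    rw [nsmul_eq_mul]
    ring
  -- Cauchy-Schwarz
  have hS : ∑ a ∈ A, (∑ b ∈ B, χ (b - a)) = (A.card : ℤ) * (B.card : ℤ) := by
    have h1 : ∀ a ∈ A, (∑ b ∈ B, χ (b - a)) = (B.card : ℤ) := by
      intro a ha
      rw [Finset.sum_congr rfl (fun b hb => h a ha b hb), Finset.sum_const, nsmul_eq_mul,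
        mul_one]
    rw [Finset.sum_congr rfl h1, Finset.sum_const, nsmul_eq_mul]
  have hCS : ((A.card : ℤ) * (B.card : ℤ)) ^ 2
      ≤ (A.card : ℤ) * ((B.card : ℤ) * q - (B.card : ℤ) ^ 2) := by
    calc ((A.card : ℤ) * (B.card : ℤ)) ^ 2
        = (∑ a ∈ A, (∑ b ∈ B, χ (b - a))) ^ 2 := by rw [hS]
      _ ≤ (A.card : ℤ) * ∑ a ∈ A, (∑ b ∈ B, χ (b - a)) ^ 2 :=
          sq_sum_le_card_mul_sum_sq
      _ ≤ (A.card : ℤ) * ∑ x : F, (∑ b ∈ B, χ (b - x)) ^ 2 := by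
          apply mul_le_mul_of_nonneg_left _ (by positivity)
          exact Finset.sum_le_sum_of_subset_of_nonneg (Finset.subset_univ A)
            (fun x _ _ => sq_nonneg _)
      _ = (A.card : ℤ) * ((B.card : ℤ) * q - (B.card : ℤ) ^ 2) := by rw [hexp]
  -- conclude
  rcases Nat.eq_zero_or_pos (A.card * B.card) with h0 | hpos
  · calc A.card * B.card = 0 := h0
      _ ≤ Fintype.card F := Nat.zero_le _
  · have hposZ : (0 : ℤ) < (A.card : ℤ) * (B.card : ℤ) := by exact_mod_cast hpos
    have hle : ((A.card : ℤ) * (B.card : ℤ)) * ((A.card : ℤ) * (B.card : ℤ))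
        ≤ ((A.card : ℤ) * (B.card : ℤ)) * q := by
      have hB2 : (0 : ℤ) ≤ (A.card : ℤ) * (B.card : ℤ) ^ 2 := by positivity
      nlinarith [hCS]
    have hfin := le_of_mul_le_mul_left hle hposZ
    rw [hqdef] at hfin
    exact_mod_cast hfin


theorem stmt11 (k : ℕ) (F : Type*) [Field F] [Fintype F] [DecidableEq F]
    (q : ℕ) (hq : Fintype.card F = q) (h3 : q % 4 = 3)
    (hbig : 2 ^ (4 * k + 2) < q) :
    ¬ ∃ col : F → F → Fin k,
      ∀ a b c : F, (a ≠ b ∧ IsSquare (b - a)) → (b ≠ c ∧ IsSquare (c - b)) →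
        col a b = col b c → ((a ≠ c ∧ IsSquare (c - a)) ∧ col a c = col a b) := by
  rintro ⟨col, H⟩
  classical
  subst hq
  set n := Fintype.card F with hn
  set s := Nat.sqrt n with hs
  have hn0 : 0 < n := Fintype.card_pos
  -- characteristic facts
  have hF2 : ringChar F ≠ 2 := by
    rw [Ne, FiniteField.even_card_iff_char_two]
    omega
  have hm1 : ¬ IsSquare (-1 : F) := by
    intro h
    rw [FiniteField.isSquare_neg_one_iff] at h
    exact h h3
  have hchi1 : quadraticChar F (-1) = -1 := quadraticChar_neg_one_iff_not_isSquare.mpr hm1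
  -- no double arcs
  have hnotboth : ∀ u v : F, u ≠ v → IsSquare (v - u) → ¬ IsSquare (u - v) := by
    intro u v huv hsq hsq'
    have h1 : quadraticChar F (v - u) = 1 :=
      (quadraticChar_one_iff_isSquare (sub_ne_zero.mpr (fun h => huv h.symm))).mpr hsq
    have h2 : quadraticChar F (u - v) = 1 :=
      (quadraticChar_one_iff_isSquare (sub_ne_zero.mpr huv)).mpr hsq'
    have h4 : (u - v) = (-1) * (v - u) := by ring
    rw [h4, map_mul, hchi1, h1] at h2
    norm_num at h2
  -- tournament: some arc exists
  have htri : ∀ u v : F, u ≠ v → ¬ IsSquare (v - u) → IsSquare (u - v) := by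
    intro u v huv hsq
    by_contra hsq'
    have h1 : quadraticChar F (v - u) = -1 := quadraticChar_neg_one_iff_not_isSquare.mpr hsq
    have h2 : quadraticChar F (u - v) = -1 := quadraticChar_neg_one_iff_not_isSquare.mpr hsq'
    have h4 : (u - v) = (-1) * (v - u) := by ring
    rw [h4, map_mul, hchi1, h1] at h2
    norm_num at h2
  -- in/out neighborhoods per color
  set In : Fin k → F → Finset F := fun c v =>
    Finset.univ.filter (fun u => u ≠ v ∧ IsSquare (v - u) ∧ col u v = c) with hIn
  set Out : Fin k → F → Finset F := fun c v =>
    Finset.univ.filter (fun w => v ≠ w ∧ IsSquare (w - v) ∧ col v w = c) with hOut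
  -- key: the spectral bound on the one-directional pair (In, Out)
  have hminIO : ∀ (c : Fin k) (v : F), min (In c v).card (Out c v).card ≤ s := by
    intro c v
    rw [hs, Nat.le_sqrt]
    calc min (In c v).card (Out c v).card * min (In c v).card (Out c v).card
        ≤ (In c v).card * (Out c v).card :=
          Nat.mul_le_mul (min_le_left _ _) (min_le_right _ _)
      _ ≤ n := by
          apply pair_bound hF2
          intro u hu w hw
          rw [hIn, Finset.mem_filter] at hu
          rw [hOut, Finset.mem_filter] at hw
          obtain ⟨-, hu1, hu2, hu3⟩ := hu
          obtain ⟨-, hw1, hw2, hw3⟩ := hw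
          obtain ⟨⟨huw, hsq⟩, -⟩ := H u v w ⟨hu1, hu2⟩ ⟨hw1, hw2⟩ (by rw [hu3, hw3])
          exact (quadraticChar_one_iff_isSquare
            (sub_ne_zero.mpr (fun h => huw h.symm))).mpr hsq
  -- types and the pigeonhole fiber
  set ty : F → Finset (Fin k) := fun v =>
    Finset.univ.filter (fun c => (In c v).card ≤ (Out c v).card) with hty
  set W : Finset (Fin k) → Finset F := fun T =>
    Finset.univ.filter (fun v => ty v = T) with hW
  obtain ⟨T, -, hTmax⟩ := Finset.exists_max_image Finset.univ (fun T => (W T).card)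
    ⟨∅, Finset.mem_univ _⟩
  have hpig : n ≤ 2 ^ k * (W T).card := by
    have h1 : n = ∑ T' ∈ (Finset.univ : Finset (Finset (Fin k))), (W T').card := by
      rw [hn, ← Finset.card_univ]
      exact Finset.card_eq_sum_card_fiberwise (fun x _ => Finset.mem_univ (ty x))
    rw [h1]
    calc ∑ T' ∈ (Finset.univ : Finset (Finset (Fin k))), (W T').card
        ≤ (Finset.univ : Finset (Finset (Fin k))).card * (W T).card := by
          rw [← smul_eq_mul]
          exact Finset.sum_le_card_nsmul _ _ _ (fun x _ => hTmax x (Finset.mem_univ _))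
      _ = 2 ^ k * (W T).card := by
          rw [Finset.card_univ, Fintype.card_finset, Fintype.card_fin]
  set Wt := W T with hWt
  set w := Wt.card with hw
  have hwpos : 0 < w := by
    rcases Nat.eq_zero_or_pos w with h0 | h
    · rw [h0, Nat.mul_zero] at hpig; omega
    · exact h
  have hvT : ∀ v ∈ Wt, ty v = T := by
    intro v hv
    rw [hWt, hW, Finset.mem_filter] at hv
    exact hv.2
  -- arc set inside Wt
  set P : Finset (F × F) := Wt.offDiag.filter (fun p => IsSquare (p.2 - p.1)) with hP
  have hcount : Wt.offDiag.card = 2 * P.card := by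
    have h1 : P.card + (Wt.offDiag.filter (fun p => ¬ IsSquare (p.2 - p.1))).card
        = Wt.offDiag.card := by
      rw [hP]
      exact Finset.card_filter_add_card_filter_not _
    have h2 : (Wt.offDiag.filter (fun p => ¬ IsSquare (p.2 - p.1))).card = P.card := by
      apply Finset.card_bij' (i := fun p _ => Prod.swap p) (j := fun p _ => Prod.swap p)
      · intro p hp
        rw [Finset.mem_filter, Finset.mem_offDiag] at hp
        obtain ⟨⟨hp1, hp2, hp3⟩, hp4⟩ := hp
        rw [hP, Finset.mem_filter, Finset.mem_offDiag]
        exact ⟨⟨hp2, hp1, fun h => hp3 h.symm⟩, htri p.1 p.2 hp3 hp4⟩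
      · intro p hp
        rw [hP, Finset.mem_filter, Finset.mem_offDiag] at hp
        obtain ⟨⟨hp1, hp2, hp3⟩, hp4⟩ := hp
        rw [Finset.mem_filter, Finset.mem_offDiag]
        exact ⟨⟨hp2, hp1, fun h => hp3 h.symm⟩, hnotboth p.1 p.2 hp3 hp4⟩
      · intro p _; exact Prod.swap_swap p
      · intro p _; exact Prod.swap_swap p
    omega
  -- split P by whether the color belongs to T
  have hsplitP := Finset.card_filter_add_card_filter_not
    (s := P) (p := fun p => col p.1 p.2 ∈ T)
  have hPmem : ∀ p ∈ P, p.1 ∈ Wt ∧ p.2 ∈ Wt ∧ p.1 ≠ p.2 ∧ IsSquare (p.2 - p.1) := by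
    intro p hp
    rw [hP, Finset.mem_filter, Finset.mem_offDiag] at hp
    exact ⟨hp.1.1, hp.1.2.1, hp.1.2.2, hp.2⟩
  -- bound the two halves
  have hP1 : (P.filter (fun p => col p.1 p.2 ∈ T)).card ≤ w * (T.card * s) := by
    rw [Finset.card_eq_sum_card_fiberwise
      (f := fun p => p.2) (t := Wt)
      (fun p hp => (hPmem p (Finset.mem_of_mem_filter p hp)).2.1)]
    rw [← smul_eq_mul, hw]
    apply Finset.sum_le_card_nsmul
    intro v hv
    have hsub : ((P.filter (fun p => col p.1 p.2 ∈ T)).filter (fun p => p.2 = v)).card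
        ≤ (T.biUnion (fun c => In c v)).card := by
      apply Finset.card_le_card_of_injOn (fun p => p.1)
      · intro p hp
        rw [Finset.mem_coe, Finset.mem_filter, Finset.mem_filter] at hp
        obtain ⟨⟨hpP, hpc⟩, hpv⟩ := hp
        obtain ⟨-, -, hne, hsq⟩ := hPmem p hpP
        rw [Finset.mem_coe, Finset.mem_biUnion]
        refine ⟨col p.1 p.2, hpc, ?_⟩
        rw [hIn, Finset.mem_filter]
        subst hpv
        exact ⟨Finset.mem_univ _, hne, hsq, rfl⟩
      · intro p hp p' hp' hpp'
        simp only [Finset.coe_filter, Set.mem_setOf_eq] at hp hp'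
        exact Prod.ext hpp' (hp.2.trans hp'.2.symm)
    refine le_trans hsub (le_trans Finset.card_biUnion_le ?_)
    rw [← smul_eq_mul]
    apply Finset.sum_le_card_nsmul
    intro c hc
    have hcy : c ∈ ty v := by rw [hvT v hv]; exact hc
    rw [hty, Finset.mem_filter] at hcy
    calc (In c v).card = min (In c v).card (Out c v).card := (min_eq_left hcy.2).symm
      _ ≤ s := hminIO c v
  have hP2 : (P.filter (fun p => ¬ col p.1 p.2 ∈ T)).card ≤ w * ((k - T.card) * s) := by
    rw [Finset.card_eq_sum_card_fiberwise
      (f := fun p => p.1) (t := Wt)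
      (fun p hp => (hPmem p (Finset.mem_of_mem_filter p hp)).1)]
    rw [← smul_eq_mul, hw]
    apply Finset.sum_le_card_nsmul
    intro u hu
    have hsub : ((P.filter (fun p => ¬ col p.1 p.2 ∈ T)).filter (fun p => p.1 = u)).card
        ≤ (Tᶜ.biUnion (fun c => Out c u)).card := by
      apply Finset.card_le_card_of_injOn (fun p => p.2)
      · intro p hp
        rw [Finset.mem_coe, Finset.mem_filter, Finset.mem_filter] at hp
        obtain ⟨⟨hpP, hpc⟩, hpu⟩ := hp
        obtain ⟨-, -, hne, hsq⟩ := hPmem p hpP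
        rw [Finset.mem_coe, Finset.mem_biUnion]
        refine ⟨col p.1 p.2, Finset.mem_compl.mpr hpc, ?_⟩
        rw [hOut, Finset.mem_filter]
        subst hpu
        exact ⟨Finset.mem_univ _, hne, hsq, rfl⟩
      · intro p hp p' hp' hpp'
        simp only [Finset.coe_filter, Set.mem_setOf_eq] at hp hp'
        exact Prod.ext (hp.2.trans hp'.2.symm) hpp'
    refine le_trans hsub (le_trans Finset.card_biUnion_le ?_)
    have hTc : Tᶜ.card = k - T.card := by
      rw [Finset.card_compl, Fintype.card_fin]
    rw [← hTc, ← smul_eq_mul]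
    apply Finset.sum_le_card_nsmul
    intro c hc
    have hcy : ¬ c ∈ ty u := by rw [hvT u hu]; exact Finset.mem_compl.mp hc
    rw [hty, Finset.mem_filter] at hcy
    push_neg at hcy
    have hlt := hcy (Finset.mem_univ c)
    calc (Out c u).card = min (In c u).card (Out c u).card :=
          (min_eq_right (le_of_lt hlt)).symm
      _ ≤ s := hminIO c u
  -- combine: w*(w-1) ≤ w * (2*k*s)
  have hTk : T.card ≤ k := by
    simpa using Finset.card_le_univ T
  have hPle : P.card ≤ w * (k * s) := by
    have e0 : w * (T.card * s) + w * ((k - T.card) * s) = w * (k * s) := by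
      rw [← Nat.mul_add, ← Nat.add_mul, Nat.add_sub_cancel' hTk]
    omega
  obtain ⟨w0, hw0⟩ : ∃ w0, w = w0 + 1 := ⟨w - 1, by omega⟩
  have hoff : Wt.offDiag.card = w * w - w := Finset.offDiag_card Wt
  have hwle : w ≤ 2 * k * s + 1 := by
    have e1 : w * w0 + w = w * w := by rw [hw0]; ring
    have e3 : w * (2 * (k * s)) = 2 * (w * (k * s)) := by ring
    have h5 : w * w0 ≤ w * (2 * (k * s)) := by
      have h51 : w * w0 = Wt.offDiag.card := by
        rw [hoff]
        exact Nat.eq_sub_of_add_eq e1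
      rw [h51, hcount, e3]
      exact Nat.mul_le_mul_left 2 hPle
    have h6 : w0 ≤ 2 * (k * s) := Nat.le_of_mul_le_mul_left h5 hwpos
    have e4 : 2 * (k * s) = 2 * k * s := by ring
    omega
  -- final contradiction
  have hsqrt1 : 2 ^ (2 * k + 1) ≤ s := by
    rw [hs, Nat.le_sqrt]
    calc 2 ^ (2 * k + 1) * 2 ^ (2 * k + 1) = 2 ^ (4 * k + 2) := by
          rw [← pow_add, show 2 * k + 1 + (2 * k + 1) = 4 * k + 2 from by ring]
      _ ≤ n := le_of_lt hbig
  have hs2 : 2 ≤ s := by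
    calc (2 : ℕ) = 2 ^ 1 := (pow_one 2).symm
      _ ≤ 2 ^ (2 * k + 1) := Nat.pow_le_pow_right (by norm_num) (by omega)
      _ ≤ s := hsqrt1
  have hk1 : k + 1 ≤ 2 ^ k := Nat.succ_le_of_lt (Nat.lt_two_pow_self (n := k))
  have hfinal : n < n := by
    calc n ≤ 2 ^ k * w := hpig
      _ ≤ 2 ^ k * (2 * k * s + 1) := Nat.mul_le_mul_left _ hwle
      _ < 2 ^ k * (2 * k * s + 2 * s) := by
          apply mul_lt_mul_of_pos_left (by omega) (pow_pos (by norm_num : (0:ℕ) < 2) k)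
      _ = 2 ^ (k + 1) * (k + 1) * s := by ring
      _ ≤ 2 ^ (k + 1) * 2 ^ k * s := by
          apply Nat.mul_le_mul_right
          exact Nat.mul_le_mul_left _ hk1
      _ = 2 ^ (2 * k + 1) * s := by
          rw [← pow_add, show k + 1 + k = 2 * k + 1 from by ring]
      _ ≤ s * s := Nat.mul_le_mul_right _ hsqrt1
      _ ≤ n := Nat.sqrt_le n
  exact absurd hfinal (lt_irrefl n)
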